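/- Let m > 0 and v > 0. For each n ≥ 1 let W_n be a real random variable with Gaussian distribution N(m, v/n). Then lim_{n→∞} (1/n) log P(W_n ≤ 0) = −m²/(2v). -/

import Mathlib

open MeasureTheory ProbabilityTheory Filter
open scoped NNReal

open Real Set in
lemma aux_exp_integrableOn_Iic {b : ℝ} (hb : 0 < b) :
    IntegrableOn (fun x : ℝ => Real.exp (b * x)) (Iic (0:ℝ)) := by
  have h : IntegrableOn (fun x : ℝ => Real.exp (-b * x)) (Ici (0:ℝ)) :=
    Iff.mpr integrableOn_Ici_iff_integrableOn_Ioi (exp_neg_integrableOn_Ioi 0 hb)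
  rw [show (volume : Measure ℝ) = Measure.map Neg.neg volume from
    (Measure.map_neg_eq_self (volume : Measure ℝ)).symm]
  have hm : MeasurableEmbedding fun x : ℝ => -x := (Homeomorph.neg ℝ).measurableEmbedding
  rw [hm.integrableOn_map_iff]
  have he : ((fun x : ℝ => Real.exp (b * x)) ∘ fun x : ℝ => -x) = fun x : ℝ => Real.exp (-b * x) := by
    ext x; simp only [Function.comp_apply, mul_neg, neg_mul]
  rw [he]
  simpa using h

open Real Set in
lemma aux_exp_integral_Iic {b : ℝ} (hb : 0 < b) :
    ∫ x in Iic (0:ℝ), Real.exp (b * x) = b⁻¹ := by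
  have h1 := integral_comp_neg_Iic (0:ℝ) (fun y : ℝ => Real.exp (-(b * y)))
  simp only [mul_neg, neg_neg, neg_zero] at h1
  rw [h1]
  have h2 := integral_comp_mul_left_Ioi (fun x => Real.exp (-x)) 0 hb
  simp only [mul_zero, smul_eq_mul, integral_exp_neg_Ioi_zero, mul_one] at h2
  simpa using h2

open Real Set in
lemma aux_log_div_nat {a : ℝ} (ha : a ≠ 0) :
    Tendsto (fun n : ℕ => (n : ℝ)⁻¹ * Real.log (a / n)) atTop (nhds 0) := by
  have hlog : Tendsto (fun n : ℕ => Real.log (n:ℝ) / (n:ℝ)) atTop (nhds 0) :=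
    (Real.isLittleO_log_id_atTop.tendsto_div_nhds_zero).comp tendsto_natCast_atTop_atTop
  have hinv : Tendsto (fun n : ℕ => ((n:ℝ))⁻¹) atTop (nhds 0) :=
    tendsto_inv_atTop_zero.comp tendsto_natCast_atTop_atTop
  have h1 : Tendsto (fun n : ℕ => (n:ℝ)⁻¹ * Real.log a - Real.log (n:ℝ) / (n:ℝ))
      atTop (nhds 0) := by
    have := (hinv.mul_const (Real.log a)).sub hlog
    simpa using this
  refine h1.congr' ?_
  filter_upwards [eventually_ge_atTop 1] with n hn
  have hn0 : ((n:ℝ)) ≠ 0 := by positivity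
  rw [Real.log_div ha hn0]
  ring

/-- If `W n` is Gaussian with mean `m > 0` and variance `v / n`, then
`(1/n) log P(W n ≤ 0) → -m²/(2v)`. -/
theorem stmt_5
    {Ω : Type*} [MeasurableSpace Ω] (P : Measure Ω) [IsProbabilityMeasure P]
    (m : ℝ) (hm : 0 < m) (v : NNReal) (hv : 0 < v)
    (W : ℕ → Ω → ℝ)
    (hdist : ∀ n : ℕ, 1 ≤ n → Measure.map (W n) P = gaussianReal m (v / n)) :
    Tendsto (fun n : ℕ => (n : ℝ)⁻¹ * Real.log (P {ω | W n ω ≤ 0}).toReal)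
      atTop (nhds (-(m ^ 2 / (2 * (v : ℝ))))) := by
  have hπ := Real.pi_pos
  have hvR : (0:ℝ) < (v:ℝ) := hv
  set I : ℕ → ℝ := fun n => ∫ x in Set.Iic (0:ℝ), gaussianPDFReal m (v / n) x with hIdef
  set U : ℕ → ℝ := fun n =>
    (Real.sqrt (2*Real.pi*((v:ℝ)/n)))⁻¹ *
      (((v:ℝ)/n)/m * Real.exp (-m^2/(2*((v:ℝ)/n)))) with hUdef
  set L : ℕ → ℝ := fun n =>
    (Real.sqrt (2*Real.pi*((v:ℝ)/n)))⁻¹ *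
      ((n:ℝ)⁻¹ * Real.exp (-(m+(n:ℝ)⁻¹)^2/(2*((v:ℝ)/n)))) with hLdef
  have hcoe : ∀ n : ℕ, ((v / (n : ℝ≥0) : ℝ≥0) : ℝ) = (v:ℝ)/(n:ℝ) := by
    intro n; rw [NNReal.coe_div, NNReal.coe_natCast]
  -- basic positivity for n ≥ 1
  have hn0 : ∀ n : ℕ, 1 ≤ n → (0:ℝ) < n := fun n hn => Nat.cast_pos.mpr hn
  have hs : ∀ n : ℕ, 1 ≤ n → (0:ℝ) < (v:ℝ)/n := fun n hn => div_pos hvR (hn0 n hn)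
  have hvn : ∀ n : ℕ, 1 ≤ n → (v / (n : ℝ≥0)) ≠ 0 := by
    intro n hn
    refine div_ne_zero hv.ne' ?_
    exact Nat.cast_ne_zero.mpr (by omega)
  -- identification of the probability with the pdf integral
  have hPI : ∀ n : ℕ, 1 ≤ n → (P {ω | W n ω ≤ 0}).toReal = I n := by
    intro n hn
    have hae : AEMeasurable (W n) P := by
      by_contra h
      have h0 : (gaussianReal m (v / (n : ℝ≥0))) Set.univ = 1 := measure_univ
      rw [← hdist n hn, Measure.map_of_not_aemeasurable h] at h0
      simp at h0
    have hset : {ω | W n ω ≤ 0} = W n ⁻¹' Set.Iic 0 := rfl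
    rw [hset, ← Measure.map_apply_of_aemeasurable hae measurableSet_Iic, hdist n hn,
      gaussianReal_apply_eq_integral _ (hvn n hn),
      ENNReal.toReal_ofReal (integral_nonneg fun x => gaussianPDFReal_nonneg _ _ _)]
  -- upper bound
  have hub : ∀ n : ℕ, 1 ≤ n → I n ≤ U n := by
    intro n hn
    have hsn := hs n hn
    have h2s : (0:ℝ) < 2 * ((v:ℝ)/n) := by positivity
    have hb : (0:ℝ) < m / ((v:ℝ)/n) := div_pos hm hsn
    have hpdf : ∀ x : ℝ, gaussianPDFReal m (v / (n : ℝ≥0)) x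
        = (Real.sqrt (2*Real.pi*((v:ℝ)/n)))⁻¹ * Real.exp (-(x-m)^2/(2*((v:ℝ)/n))) := by
      intro x; rw [gaussianPDFReal]; rw [hcoe n]
    have hint2 : IntegrableOn (fun x : ℝ =>
        (Real.sqrt (2*Real.pi*((v:ℝ)/n)))⁻¹ * (Real.exp (-m^2/(2*((v:ℝ)/n)))
          * Real.exp (m/((v:ℝ)/n) * x))) (Set.Iic 0) :=
      ((aux_exp_integrableOn_Iic hb).const_mul _).const_mul _
    calc I n ≤ ∫ x in Set.Iic (0:ℝ),
          (Real.sqrt (2*Real.pi*((v:ℝ)/n)))⁻¹ * (Real.exp (-m^2/(2*((v:ℝ)/n)))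
            * Real.exp (m/((v:ℝ)/n) * x)) := by
          refine setIntegral_mono_on ((integrable_gaussianPDFReal m _).integrableOn)
            hint2 measurableSet_Iic ?_
          intro x hx
          rw [hpdf x, ← Real.exp_add]
          refine mul_le_mul_of_nonneg_left (Real.exp_le_exp.mpr ?_)
            (inv_nonneg.2 (Real.sqrt_nonneg _))
          have heq : -m^2/(2*((v:ℝ)/n)) + m/((v:ℝ)/n) * x
              = (-m^2 + 2*m*x)/(2*((v:ℝ)/n)) := by field_simp
          rw [heq, div_le_div_iff_of_pos_right h2s]
          nlinarith [sq_nonneg x]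
      _ = U n := by
          rw [integral_const_mul, integral_const_mul, aux_exp_integral_Iic hb, hUdef]
          rw [inv_div]
          ring
  -- lower bound
  have hlb : ∀ n : ℕ, 1 ≤ n → L n ≤ I n := by
    intro n hn
    have hsn := hs n hn
    have hnR := hn0 n hn
    have h2s : (0:ℝ) < 2 * ((v:ℝ)/n) := by positivity
    have hpdf : ∀ x : ℝ, gaussianPDFReal m (v / (n : ℝ≥0)) x
        = (Real.sqrt (2*Real.pi*((v:ℝ)/n)))⁻¹ * Real.exp (-(x-m)^2/(2*((v:ℝ)/n))) := by
      intro x; rw [gaussianPDFReal]; rw [hcoe n]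
    have hIcc : IntegrableOn (gaussianPDFReal m (v / (n : ℝ≥0))) (Set.Icc (-(n:ℝ)⁻¹) 0) :=
      (integrable_gaussianPDFReal m _).integrableOn
    calc L n = ∫ _x in Set.Icc (-(n:ℝ)⁻¹) (0:ℝ),
          (Real.sqrt (2*Real.pi*((v:ℝ)/n)))⁻¹
            * Real.exp (-(m+(n:ℝ)⁻¹)^2/(2*((v:ℝ)/n))) := by
          rw [setIntegral_const, measureReal_def, Real.volume_Icc, smul_eq_mul,
            ENNReal.toReal_ofReal (by rw [zero_sub, neg_neg]; positivity)]
          rw [hLdef]; ring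
      _ ≤ ∫ x in Set.Icc (-(n:ℝ)⁻¹) (0:ℝ), gaussianPDFReal m (v / (n : ℝ≥0)) x := by
          refine setIntegral_mono_on ((integrableOn_const_iff).2 (Or.inr ?_)) hIcc
            measurableSet_Icc ?_
          · rw [Real.volume_Icc]; exact ENNReal.ofReal_lt_top
          · intro x hx
            rw [hpdf x]
            refine mul_le_mul_of_nonneg_left (Real.exp_le_exp.mpr ?_)
              (inv_nonneg.2 (Real.sqrt_nonneg _))
            rw [neg_div, neg_div, neg_le_neg_iff, div_le_div_iff_of_pos_right h2s]
            have hx1 : -(n:ℝ)⁻¹ ≤ x := hx.1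
            have hx2 : x ≤ 0 := hx.2
            have hni : (0:ℝ) < (n:ℝ)⁻¹ := by positivity
            exact sq_le_sq' (by linarith) (by linarith)
      _ ≤ I n := by
          refine setIntegral_mono_set (integrable_gaussianPDFReal m _).integrableOn
            (Filter.Eventually.of_forall fun x => gaussianPDFReal_nonneg _ _ _) ?_
          exact HasSubset.Subset.eventuallyLE Set.Icc_subset_Iic_self
  -- positivity of bounds
  have hLpos : ∀ n : ℕ, 1 ≤ n → 0 < L n := by
    intro n hn
    have hsn := hs n hn
    have hnR := hn0 n hn
    rw [hLdef]
    have h1 : (0:ℝ) < Real.sqrt (2*Real.pi*((v:ℝ)/n)) := Real.sqrt_pos.mpr (by positivity)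
    positivity
  -- squeeze
  refine tendsto_of_tendsto_of_tendsto_of_le_of_le'
    (g := fun n : ℕ => (n:ℝ)⁻¹ * Real.log (L n))
    (h := fun n : ℕ => (n:ℝ)⁻¹ * Real.log (U n)) ?_ ?_ ?_ ?_
  · -- lower bound tendsto
    have t1 : Tendsto (fun n : ℕ => (-(1/2 : ℝ)) * ((n:ℝ)⁻¹ * Real.log ((2*Real.pi*(v:ℝ)) / n)))
        atTop (nhds 0) := by
      simpa using (aux_log_div_nat (a := 2*Real.pi*(v:ℝ)) (by positivity)).const_mul (-(1/2:ℝ))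
    have t2 : Tendsto (fun n : ℕ => (n:ℝ)⁻¹ * Real.log (1 / (n:ℝ))) atTop (nhds 0) :=
      aux_log_div_nat one_ne_zero
    have hinv : Tendsto (fun n : ℕ => ((n:ℝ))⁻¹) atTop (nhds 0) :=
      tendsto_inv_atTop_zero.comp tendsto_natCast_atTop_atTop
    have t3 : Tendsto (fun n : ℕ => -((m+(n:ℝ)⁻¹)^2/(2*(v:ℝ)))) atTop
        (nhds (-(m^2/(2*(v:ℝ))))) := by
      have h4 : Tendsto (fun n : ℕ => m + (n:ℝ)⁻¹) atTop (nhds (m + 0)) :=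
        tendsto_const_nhds.add hinv
      have h5 := ((h4.pow 2).div_const (2*(v:ℝ))).neg
      simpa using h5
    have hsum := (t1.add t2).add t3
    rw [zero_add, zero_add] at hsum
    refine Filter.Tendsto.congr' ?_ hsum
    filter_upwards [eventually_ge_atTop 1] with n hn
    have hsn := hs n hn
    have hnR := hn0 n hn
    have hsq : (0:ℝ) < Real.sqrt (2*Real.pi*((v:ℝ)/n)) := Real.sqrt_pos.mpr (by positivity)
    rw [hLdef]
    simp only
    rw [Real.log_mul (by positivity) (by positivity),
      Real.log_mul (by positivity) (Real.exp_ne_zero _), Real.log_exp, Real.log_inv,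
      Real.log_sqrt (by positivity), ← mul_div_assoc, Real.log_inv, ← Real.log_inv,
      ← one_div]
    field_simp
    ring
  · -- upper bound tendsto
    have t1 : Tendsto (fun n : ℕ => (-(1/2 : ℝ)) * ((n:ℝ)⁻¹ * Real.log ((2*Real.pi*(v:ℝ)) / n)))
        atTop (nhds 0) := by
      simpa using (aux_log_div_nat (a := 2*Real.pi*(v:ℝ)) (by positivity)).const_mul (-(1/2:ℝ))
    have t2 : Tendsto (fun n : ℕ => (n:ℝ)⁻¹ * Real.log (((v:ℝ)/m) / n)) atTop (nhds 0) :=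
      aux_log_div_nat (by positivity)
    have t3 : Tendsto (fun _ : ℕ => -(m^2/(2*(v:ℝ)))) atTop (nhds (-(m^2/(2*(v:ℝ))))) :=
      tendsto_const_nhds
    have hsum := (t1.add t2).add t3
    rw [zero_add, zero_add] at hsum
    refine Filter.Tendsto.congr' ?_ hsum
    filter_upwards [eventually_ge_atTop 1] with n hn
    have hsn := hs n hn
    have hnR := hn0 n hn
    have hsq : (0:ℝ) < Real.sqrt (2*Real.pi*((v:ℝ)/n)) := Real.sqrt_pos.mpr (by positivity)
    rw [hUdef]
    simp only
    rw [Real.log_mul (by positivity) (by positivity),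
      Real.log_mul (by positivity) (Real.exp_ne_zero _), Real.log_exp, Real.log_inv,
      Real.log_sqrt (by positivity), ← mul_div_assoc, div_right_comm]
    field_simp
    ring
  · filter_upwards [eventually_ge_atTop 1] with n hn
    refine mul_le_mul_of_nonneg_left ?_ (by positivity)
    rw [hPI n hn]
    exact Real.log_le_log (hLpos n hn) (hlb n hn)
  · filter_upwards [eventually_ge_atTop 1] with n hn
    refine mul_le_mul_of_nonneg_left ?_ (by positivity)
    rw [hPI n hn]
    exact Real.log_le_log (lt_of_lt_of_le (hLpos n hn) (hlb n hn)) (hub n hn)
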